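/- arXiv:1807.04576 — 2 statements merged into one kernel-verified Lean document; each statement's English description precedes it below -/
import Mathlib

section
/- Fix integers a ≥ 1, c ≥ 1 and m ≥ 0. Then there exists a polynomial P ∈ ℚ[X] of degree at most ⌊m/(ac)⌋ such that A_{a,b,c}(m) = P(b) for every integer b. That is, for fixed a, c and m, the coefficient A_{a,b,c}(m) is a polynomial function of b of degree at most ⌊m/(ac)⌋. -/
open scoped Classical

/-- The unit of `ℤ⟦X⟧` given by `1 - X^k` (for `k ≥ 1`; junk value `1` otherwise). -/
noncomputable def etaUnit (k : ℕ) : (PowerSeries ℤ)ˣ :=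
  if h : IsUnit ((1 : PowerSeries ℤ) - PowerSeries.X ^ k) then h.unit else 1

/-- `A a b c m` is the coefficient of `q^m` in
`F_{a,b,c} = ∏_{n=1}^∞ (1-q^{an})^a (1-q^{acn})^{b-a} (1-q^n)⁻¹`.
Since every factor with `n > m` is `1 + O(q^{m+1})` (as `a, c ≥ 1`), the coefficient of `q^m`
in the infinite product equals the corresponding coefficient of the finite product over
`1 ≤ n ≤ m`. -/
noncomputable def A (a : ℕ) (b : ℤ) (c : ℕ) (m : ℕ) : ℤ :=
  PowerSeries.coeff (R := ℤ) m
    ((∏ n ∈ Finset.Icc 1 m,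
      (etaUnit (a * n)) ^ a * (etaUnit (a * c * n)) ^ (b - a) * (etaUnit n)⁻¹ :
        (PowerSeries ℤ)ˣ) : PowerSeries ℤ)

/-- A power series with coefficient sequence `α` is lacunary if almost all of its
coefficients vanish. -/
def IsLacunary (α : ℕ → ℤ) : Prop :=
  Filter.Tendsto
    (fun x : ℕ => (((Finset.range x).filter fun m => α m = 0).card : ℝ) / x)
    Filter.atTop (nhds 1)


section Helpers
open Polynomial

/-- Forward difference operator. -/
private def fdiff {R : Type*} [Ring R] (f : ℤ → R) : ℤ → R := fun b => f (b + 1) - f b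

private lemma const_of_fdiff {R : Type*} [Ring R] (f : ℤ → R) (h : ∀ b, f (b + 1) = f b) :
    ∀ b, f b = f 0 := by
  intro b
  induction b using Int.induction_on with
  | zero => rfl
  | succ k ih => rw [← ih]; exact_mod_cast h k
  | pred k ih =>
      have h2 := h (-(k : ℤ) - 1)
      have h3 : -(k : ℤ) - 1 + 1 = -(k : ℤ) := by ring
      rw [h3] at h2
      rw [← ih, ← h2]

private lemma exists_antideriv : ∀ (n : ℕ) (Q : Polynomial ℚ), Q.degree ≤ n →
    ∃ P : Polynomial ℚ, P.degree ≤ (n + 1 : ℕ) ∧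
      ∀ x : ℚ, P.eval (x + 1) - P.eval x = Q.eval x := by
  intro n
  induction n with
  | zero =>
      intro Q hQ
      refine ⟨C (Q.coeff 0) * X, ?_, ?_⟩
      · rw [← smul_eq_C_mul]
        exact (degree_smul_le _ _).trans (by simp [degree_X])
      · intro x
        rw [eq_C_of_degree_le_zero hQ]
        simp
        ring
  | succ n ih =>
      intro Q hQ
      set k : ℚ := Q.coeff (n + 1) with hk
      set D : Polynomial ℚ := (X + 1) ^ (n + 2) - X ^ (n + 2) with hD
      set R : Polynomial ℚ := Q - C (k / (n + 2)) * D with hR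
      have hDcoeff : ∀ j, D.coeff j = ((n + 2).choose j : ℚ) - if n + 2 = j then 1 else 0 := by
        intro j
        simp [hD, coeff_X_add_one_pow, coeff_X_pow, eq_comm]
      have hRdeg : R.degree ≤ n := by
        rw [degree_le_iff_coeff_zero]
        intro j hj
        have hj' : n < j := by exact_mod_cast hj
        rcases eq_or_lt_of_le (Nat.succ_le_of_lt hj') with hje | hjl
        · -- j = n + 1
          have : j = n + 1 := hje.symm
          subst this
          simp only [hR, coeff_sub, coeff_C_mul, hDcoeff]
          have : (n + 1 : ℕ) ≠ n + 2 := by omega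
          rw [if_neg (by omega : ¬ n + 2 = n + 1)]
          have hch : ((n + 2).choose (n + 1) : ℚ) = (n + 2 : ℚ) := by
            rw [Nat.choose_succ_self_right]
            push_cast; ring
          rw [hch]
          have hne : (n + 2 : ℚ) ≠ 0 := by positivity
          field_simp [hk]
          rw [hk]; ring
        · -- j ≥ n + 2
          have hQj : Q.coeff j = 0 :=
            coeff_eq_zero_of_degree_lt (lt_of_le_of_lt hQ (by exact_mod_cast hjl))
          simp only [hR, coeff_sub, coeff_C_mul, hDcoeff, hQj]
          rcases eq_or_lt_of_le (Nat.succ_le_of_lt hjl) with hje2 | hjl2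
          · rw [← hje2]; simp
          · rw [if_neg (by omega), Nat.choose_eq_zero_of_lt hjl2]
            simp
      obtain ⟨P0, hP0deg, hP0⟩ := ih R hRdeg
      refine ⟨P0 + C (k / (n + 2)) * X ^ (n + 2), ?_, ?_⟩
      · refine (degree_add_le _ _).trans (max_le ?_ ?_)
        · exact hP0deg.trans (by exact_mod_cast Nat.le_succ (n + 1))
        · rw [← smul_eq_C_mul]
          exact (degree_smul_le _ _).trans (by rw [degree_X_pow])
      · intro x
        have h1 := hP0 x
        have hRx : R.eval x = Q.eval x - (k / (n + 2)) * ((x + 1) ^ (n + 2) - x ^ (n + 2)) := by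
          simp [hR, hD]
        rw [hRx] at h1
        simp only [eval_add, eval_mul, eval_C, eval_pow, eval_X]
        linarith [h1]

private lemma fdiff_def {R : Type*} [Ring R] (f : ℤ → R) (b : ℤ) : fdiff f b = f (b + 1) - f b := rfl


private lemma poly_of_fdiff : ∀ (n : ℕ) (f : ℤ → ℚ), (∀ b, (fdiff^[n + 1] f) b = 0) →
    ∃ P : Polynomial ℚ, P.degree ≤ n ∧ ∀ b : ℤ, f b = P.eval (b : ℚ) := by
  intro n
  induction n with
  | zero =>
      intro f h
      have hc : ∀ b, f (b + 1) = f b := by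
        intro b
        have := h b
        simp only [zero_add, Function.iterate_one] at this
        rw [fdiff_def] at this
        linarith
      exact ⟨C (f 0), degree_C_le, fun b => by rw [const_of_fdiff f hc b]; simp⟩
  | succ n ih =>
      intro f h
      obtain ⟨Q, hQdeg, hQ⟩ := ih (fdiff f) (fun b => by
        have := h b
        rwa [Function.iterate_succ_apply] at this)
      obtain ⟨P0, hP0deg, hP0⟩ := exists_antideriv n Q hQdeg
      have hconst := const_of_fdiff (fun b : ℤ => f b - P0.eval (b : ℚ)) (by
        intro b
        have h1 := hQ b
        rw [fdiff_def] at h1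
        have h2 := hP0 (b : ℚ)
        push_cast
        linarith)
      refine ⟨P0 + C (f 0 - P0.eval 0), ?_, ?_⟩
      · refine (degree_add_le _ _).trans (max_le hP0deg (degree_C_le.trans ?_))
        exact_mod_cast Nat.zero_le (n + 1)
      · intro b
        have := hconst b
        simp only [eval_add, eval_C]
        push_cast at this ⊢
        linarith

private lemma prod_sub_one_dvd {R : Type*} [CommRing R] {ι : Type*} {r : R} {s : Finset ι} {g : ι → R}
    (h : ∀ i ∈ s, r ∣ g i - 1) : r ∣ (∏ i ∈ s, g i) - 1 := by
  refine Finset.prod_induction g (fun x => r ∣ x - 1) ?_ (by simp) h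
  intro x y hx hy
  have : x * y - 1 = x * (y - 1) + (x - 1) := by ring
  rw [this]
  exact dvd_add (hy.mul_left x) hx

private lemma cast_fdiff_iter : ∀ (j : ℕ) (F : ℤ → ℤ) (b : ℤ),
    (fdiff^[j] (fun x => (F x : ℚ))) b = ((fdiff^[j] F) b : ℚ) := by
  intro j
  induction j with
  | zero => intro F b; simp
  | succ j ih =>
      intro F b
      rw [Function.iterate_succ_apply, Function.iterate_succ_apply]
      have : (fdiff (fun x => (F x : ℚ))) = fun x => (Int.cast (fdiff F x) : ℚ) := by
        funext x
        rw [fdiff_def, fdiff_def]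
        push_cast
        ring
      rw [this, ih]

private lemma etaUnit_val (k : ℕ) (hk : 1 ≤ k) :
    ((etaUnit k : (PowerSeries ℤ)ˣ) : PowerSeries ℤ) = 1 - PowerSeries.X ^ k := by
  have h : IsUnit ((1 : PowerSeries ℤ) - PowerSeries.X ^ k) := by
    rw [PowerSeries.isUnit_iff_constantCoeff]
    simp [zero_pow (by omega : k ≠ 0)]
  rw [etaUnit, dif_pos h, IsUnit.unit_spec]

/-- For fixed `a ≥ 1`, `c ≥ 1` and `m ≥ 0`, the coefficient `A_{a,b,c}(m)` is a polynomial
function of `b` of degree at most `⌊m / (ac)⌋`. -/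
theorem coeff_polynomial_in_b (a c m : ℕ) (ha : 1 ≤ a) (hc : 1 ≤ c) :
    ∃ P : Polynomial ℚ, P.degree ≤ (m / (a * c) : ℕ) ∧
      ∀ b : ℤ, (A a b c m : ℚ) = P.eval (b : ℚ) := by
  set d := m / (a * c) with hd
  set Gu : (PowerSeries ℤ)ˣ :=
    ∏ n ∈ Finset.Icc 1 m, (etaUnit (a * n)) ^ a * (etaUnit n)⁻¹ with hGu
  set Vu : (PowerSeries ℤ)ˣ := ∏ n ∈ Finset.Icc 1 m, etaUnit (a * c * n) with hVu
  -- rewrite A as coefficient of Gu * Vu^(b-a)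
  have hA : ∀ b : ℤ, A a b c m =
      PowerSeries.coeff (R := ℤ) m ((Gu * Vu ^ (b - (a : ℤ)) : (PowerSeries ℤ)ˣ) : PowerSeries ℤ) := by
    intro b
    rw [A]
    congr 2
    rw [hGu, hVu, ← Finset.prod_zpow, ← Finset.prod_mul_distrib]
    exact Finset.prod_congr rfl fun n _ => (mul_right_comm _ _ _).symm
  -- divisibility of Vu - 1
  have hW : (PowerSeries.X : PowerSeries ℤ) ^ (a * c) ∣ ((Vu : PowerSeries ℤ) - 1) := by
    rw [hVu, Units.coe_prod]
    refine prod_sub_one_dvd ?_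
    intro n hn
    have hn1 : 1 ≤ n := (Finset.mem_Icc.mp hn).1
    rw [etaUnit_val _ (Nat.mul_pos (Nat.mul_pos ha hc) hn1)]
    have : (1 : PowerSeries ℤ) - PowerSeries.X ^ (a * c * n) - 1 = -(PowerSeries.X ^ (a * c * n)) := by ring
    rw [this]
    exact (pow_dvd_pow _ (Nat.le_mul_of_pos_right _ hn1)).neg_right
  -- the integer-valued coefficient function
  set F : ℤ → ℤ := fun b => PowerSeries.coeff (R := ℤ) m
      ((Gu : PowerSeries ℤ) * ((Vu ^ (b - (a : ℤ)) : (PowerSeries ℤ)ˣ) : PowerSeries ℤ)) with hF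
  have hiter : ∀ (j : ℕ) (b : ℤ), (fdiff^[j] F) b = PowerSeries.coeff (R := ℤ) m
      ((Gu : PowerSeries ℤ) * ((Vu ^ (b - (a : ℤ)) : (PowerSeries ℤ)ˣ) : PowerSeries ℤ)
        * ((Vu : PowerSeries ℤ) - 1) ^ j) := by
    intro j
    induction j with
    | zero => intro b; simp [hF]
    | succ j ih =>
        intro b
        rw [Function.iterate_succ_apply', fdiff_def, ih, ih]
        rw [← map_sub]
        congr 1
        have he : b + 1 - (a : ℤ) = (b - a) + 1 := by ring
        rw [he, zpow_add_one, Units.val_mul]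
        ring
  have hvanish : ∀ b : ℤ, (fdiff^[d + 1] F) b = 0 := by
    intro b
    rw [hiter]
    have hdvd : (PowerSeries.X : PowerSeries ℤ) ^ (a * c * (d + 1)) ∣
        ((Gu : PowerSeries ℤ) * ((Vu ^ (b - (a : ℤ)) : (PowerSeries ℤ)ˣ) : PowerSeries ℤ)
          * ((Vu : PowerSeries ℤ) - 1) ^ (d + 1)) := by
      refine Dvd.dvd.mul_left ?_ _
      have := pow_dvd_pow_of_dvd hW (d + 1)
      rwa [← pow_mul] at this
    refine PowerSeries.X_pow_dvd_iff.mp hdvd m ?_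
    have h1 : a * c * d + m % (a * c) = m := by rw [hd]; exact Nat.div_add_mod m (a * c)
    have h2 : m % (a * c) < a * c := Nat.mod_lt _ (by positivity)
    have h3 : a * c * (d + 1) = a * c * d + a * c := by ring
    rw [h3, ← h1]
    exact Nat.add_lt_add_left h2 _
  obtain ⟨P, hPdeg, hP⟩ := poly_of_fdiff d (fun b => ((F b : ℚ))) (fun b => by
    rw [cast_fdiff_iter, hvanish b, Int.cast_zero])
  exact ⟨P, hPdeg, fun b => by rw [hA b, Units.val_mul]; exact hP b⟩

end Helpers
end

section
/- Let t be a squarefree positive integer coprime to 6 having at least 12 distinct prime factors. Then there exists a positive integer s < t with s ≡ 23 (mod 24) such that the Jacobi symbol (−p | s) equals −1 for every prime p dividing t. -/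
open Finset ArithmeticFunction
open scoped ArithmeticFunction.Moebius ArithmeticFunction.zeta

private lemma sq24 : ∀ r < 24, ¬ 2 ∣ r → ¬ 3 ∣ r → r ^ 2 % 24 = 1 := by decide

private lemma sq_mod24 {u : ℕ} (h2 : ¬ 2 ∣ u) (h3 : ¬ 3 ∣ u) : u ^ 2 % 24 = 1 := by
  have : u ^ 2 % 24 = (u % 24) ^ 2 % 24 := by rw [Nat.pow_mod]
  rw [this]
  exact sq24 _ (Nat.mod_lt _ (by norm_num)) (by omega) (by omega)

private lemma sum_moebius_divisors (n : ℕ) :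
    (∑ d ∈ n.divisors, μ d) = if n = 1 then 1 else 0 := by
  rw [← coe_mul_zeta_apply, moebius_mul_coe_zeta, one_apply]

private lemma card_dvd_Ioc (A B d : ℕ) (h : A ≤ B) :
    #((Ioc A B).filter (d ∣ ·)) = B / d - A / d := by
  have h1 := Nat.Ioc_filter_dvd_card_eq_div B d
  have h2 := Nat.Ioc_filter_dvd_card_eq_div A d
  have hu : Ioc 0 A ∪ Ioc A B = Ioc 0 B := Finset.Ioc_union_Ioc_eq_Ioc (Nat.zero_le A) h
  have hd : Disjoint (Ioc 0 A) (Ioc A B) := by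
    rw [Finset.disjoint_left]; intro a ha hb; simp at ha hb; omega
  have := Finset.card_union_of_disjoint (Finset.disjoint_filter_filter hd)
    (s := (Ioc 0 A).filter (d ∣ ·)) (t := (Ioc A B).filter (d ∣ ·))
  rw [← Finset.filter_union, hu] at this
  have hle : A / d ≤ B / d := Nat.div_le_div_right h
  simp only [h1, h2] at this ⊢
  omega

private lemma legendre_count (m A B : ℕ) (hm : m ≠ 0) (hAB : A ≤ B) :
    (#((Ioc A B).filter (fun u => Nat.Coprime u m)) : ℤ)
      = ∑ d ∈ m.divisors, μ d * (((B / d : ℕ) : ℤ) - ((A / d : ℕ) : ℤ)) := by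
  have step1 : (#((Ioc A B).filter (fun u => Nat.Coprime u m)) : ℤ)
      = ∑ u ∈ Ioc A B, if Nat.Coprime u m then (1 : ℤ) else 0 := by
    rw [Finset.card_filter]
    push_cast
    rfl
  rw [step1]
  have step2 : ∀ u ∈ Ioc A B,
      (if Nat.Coprime u m then (1 : ℤ) else 0) = ∑ d ∈ m.divisors.filter (· ∣ u), μ d := by
    intro u hu
    have hu0 : u ≠ 0 := by simp at hu; omega
    have hdiv : (Nat.gcd u m).divisors = m.divisors.filter (· ∣ u) := by
      ext d
      simp only [Nat.mem_divisors, Finset.mem_filter, Nat.dvd_gcd_iff]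
      constructor
      · rintro ⟨⟨h1, h2⟩, -⟩; exact ⟨⟨h2, hm⟩, h1⟩
      · rintro ⟨⟨h1, -⟩, h2⟩; exact ⟨⟨h2, h1⟩, fun hc => hm (Nat.eq_zero_of_gcd_eq_zero_right hc)⟩
    rw [← hdiv, sum_moebius_divisors]
  rw [Finset.sum_congr rfl step2]
  have step3 : ∀ u ∈ Ioc A B, (∑ d ∈ m.divisors.filter (· ∣ u), μ d)
      = ∑ d ∈ m.divisors, if d ∣ u then μ d else 0 := fun u _ => Finset.sum_filter _ _
  rw [Finset.sum_congr rfl step3, Finset.sum_comm]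
  refine Finset.sum_congr rfl fun d hd => ?_
  rw [← Finset.sum_filter]
  rw [Finset.sum_const]
  rw [card_dvd_Ioc A B d hAB]
  have hle : A / d ≤ B / d := Nat.div_le_div_right hAB
  rw [nsmul_eq_mul, Nat.cast_sub hle]
  ring

private lemma moebius_div_sum (m : ℕ) (hm : Squarefree m) :
    ∑ d ∈ m.divisors, (μ d : ℝ) / d = ∏ p ∈ m.primeFactors, (1 - 1 / (p : ℝ)) := by
  have hmult : IsMultiplicative
      (ArithmeticFunction.pdiv ((ζ : ArithmeticFunction ℕ) : ArithmeticFunction ℝ)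
        ((ArithmeticFunction.id : ArithmeticFunction ℕ) : ArithmeticFunction ℝ)) :=
    (isMultiplicative_zeta.natCast).pdiv (isMultiplicative_id.natCast)
  have h := IsMultiplicative.prodPrimeFactors_one_sub_of_squarefree _ hmult hm
  calc ∑ d ∈ m.divisors, (μ d : ℝ) / d
      = ∑ d ∈ m.divisors, (μ d : ℝ) * (((ζ : ArithmeticFunction ℕ) : ArithmeticFunction ℝ).pdiv
          ((ArithmeticFunction.id : ArithmeticFunction ℕ) : ArithmeticFunction ℝ)) d := by
        apply Finset.sum_congr rfl
        intro d hd
        have hd0 : d ≠ 0 := Nat.pos_of_mem_divisors hd |>.ne'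
        simp [pdiv_apply, natCoe_apply, zeta_apply, hd0, div_eq_mul_inv, one_div]
    _ = ∏ p ∈ m.primeFactors, (1 - 1 / (p : ℝ)) := by
        rw [← h]
        apply Finset.prod_congr rfl
        intro p hp
        have hp0 : p ≠ 0 := (Nat.prime_of_mem_primeFactors hp).ne_zero
        simp [pdiv_apply, natCoe_apply, zeta_apply, hp0, one_div]

private lemma count_lower (m A B : ℕ) (hm : Squarefree m) (hAB : A ≤ B) :
    ((B : ℝ) - A) * ∏ p ∈ m.primeFactors, (1 - 1 / (p : ℝ)) - 2 ^ m.primeFactors.card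
      ≤ (#((Ioc A B).filter (fun u => Nat.Coprime u m)) : ℝ) := by
  have hm0 : m ≠ 0 := hm.ne_zero
  have hcard : (m.divisors.card : ℝ) = 2 ^ m.primeFactors.card := by
    rw [Nat.card_divisors hm0,
      Finset.prod_congr rfl (fun p hp => by
        rw [Nat.factorization_eq_one_of_squarefree hm (Nat.prime_of_mem_primeFactors hp)
          (Nat.dvd_of_mem_primeFactors hp)])]
    push_cast
    norm_num
  have hreal : (#((Ioc A B).filter (fun u => Nat.Coprime u m)) : ℝ)
      = ∑ d ∈ m.divisors, (μ d : ℝ) * (((B / d : ℕ) : ℝ) - ((A / d : ℕ) : ℝ)) := by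
    have := legendre_count m A B hm0 hAB
    have h2 := congrArg (fun z : ℤ => (z : ℝ)) this
    simp only [Int.cast_sum, Int.cast_mul, Int.cast_sub, Int.cast_natCast] at h2
    convert h2 using 2
  rw [hreal]
  have key : ∀ d ∈ m.divisors,
      (μ d : ℝ) * (((B : ℝ) - A) / d) - 1
        ≤ (μ d : ℝ) * (((B / d : ℕ) : ℝ) - ((A / d : ℕ) : ℝ)) := by
    intro d hd
    have hd0 : 0 < d := Nat.pos_of_mem_divisors hd
    have hdR : (0 : ℝ) < d := by exact_mod_cast hd0
    have hdsf : Squarefree d := hm.squarefree_of_dvd (Nat.dvd_of_mem_divisors hd)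
    have hBle : ((B / d : ℕ) : ℝ) ≤ (B : ℝ) / d := Nat.cast_div_le
    have hAle : ((A / d : ℕ) : ℝ) ≤ (A : ℝ) / d := Nat.cast_div_le
    have hnat : ∀ C : ℕ, C < (C / d + 1) * d := by
      intro C
      have h1 := Nat.div_add_mod C d
      have h2 := Nat.mod_lt C hd0
      calc C = d * (C / d) + C % d := h1.symm
        _ < d * (C / d) + d := by omega
        _ = (C / d + 1) * d := by ring
    have hBgt : (B : ℝ) / d < ((B / d : ℕ) : ℝ) + 1 := by
      rw [div_lt_iff₀ hdR]
      exact_mod_cast hnat B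
    have hAgt : (A : ℝ) / d < ((A / d : ℕ) : ℝ) + 1 := by
      rw [div_lt_iff₀ hdR]
      exact_mod_cast hnat A
    have hmu : (μ d : ℝ) = 1 ∨ (μ d : ℝ) = -1 := by
      rcases (abs_eq (by norm_num : (0:ℤ) ≤ 1)).mp (abs_moebius_eq_one_of_squarefree hdsf) with h | h
      · left; exact_mod_cast h
      · right; exact_mod_cast h
    have hsub : ((B : ℝ) - A) / d = (B : ℝ) / d - (A : ℝ) / d := by ring
    rcases hmu with h | h <;> rw [h] <;> nlinarith
  calc ((B : ℝ) - A) * ∏ p ∈ m.primeFactors, (1 - 1 / (p : ℝ)) - 2 ^ m.primeFactors.card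
      = ∑ d ∈ m.divisors, ((μ d : ℝ) * (((B : ℝ) - A) / d) - 1) := by
        rw [Finset.sum_sub_distrib, Finset.sum_const, ← moebius_div_sum m hm]
        rw [Finset.mul_sum]
        rw [Finset.sum_congr rfl (fun d _ => by ring :
          ∀ d ∈ m.divisors, ((B : ℝ) - A) * ((μ d : ℝ) / d) = (μ d : ℝ) * (((B : ℝ) - A) / d))]
        simp [hcard]
    _ ≤ _ := Finset.sum_le_sum key

private lemma sqrt_prod (S : Finset ℕ) :
    Real.sqrt (∏ p ∈ S, (p : ℝ)) = ∏ p ∈ S, Real.sqrt (p : ℝ) := by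
  have h1 : (∏ p ∈ S, Real.sqrt (p : ℝ)) ^ 2 = ∏ p ∈ S, (p : ℝ) := by
    rw [← Finset.prod_pow]
    exact Finset.prod_congr rfl fun p _ => Real.sq_sqrt (by positivity)
  rw [← h1, Real.sqrt_sq (Finset.prod_nonneg fun p _ => Real.sqrt_nonneg _)]

private lemma prod_g (t : ℕ) (ht : Squarefree t) :
    Real.sqrt t * ∏ p ∈ t.primeFactors, (1 - 1/(p:ℝ))
      = ∏ p ∈ t.primeFactors, ((p:ℝ) - 1) / Real.sqrt p := by
  have htR : ((t:ℕ):ℝ) = ∏ p ∈ t.primeFactors, (p : ℝ) := by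
    rw [← Nat.cast_prod, Nat.prod_primeFactors_of_squarefree ht]
  rw [htR, sqrt_prod, ← Finset.prod_mul_distrib]
  refine Finset.prod_congr rfl fun p hp => ?_
  have hp1 : 1 ≤ p := (Nat.prime_of_mem_primeFactors hp).one_lt.le
  have hp0 : (0:ℝ) < (p:ℝ) := by exact_mod_cast Nat.lt_of_lt_of_le Nat.zero_lt_one hp1
  have hs0 : 0 < Real.sqrt p := Real.sqrt_pos.mpr hp0
  have hs : Real.sqrt p ^ 2 = (p:ℝ) := Real.sq_sqrt hp0.le
  field_simp
  nlinarith [hs]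


private lemma g5 {p : ℕ} (hp : 5 ≤ p) : (17/10 : ℝ) ≤ ((p : ℝ) - 1) / Real.sqrt p := by
  have hpR : (5 : ℝ) ≤ (p : ℝ) := by exact_mod_cast hp
  have hs := Real.sq_sqrt (by positivity : (0:ℝ) ≤ (p:ℝ))
  have hs0 : 0 < Real.sqrt p := Real.sqrt_pos.mpr (by linarith)
  rw [le_div_iff₀ hs0]
  nlinarith [sq_nonneg (Real.sqrt p - 17/10)]

private lemma g11 {p : ℕ} (hp : 11 ≤ p) : (3 : ℝ) ≤ ((p : ℝ) - 1) / Real.sqrt p := by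
  have hpR : (11 : ℝ) ≤ (p : ℝ) := by exact_mod_cast hp
  have hs := Real.sq_sqrt (by positivity : (0:ℝ) ≤ (p:ℝ))
  have hs0 : 0 < Real.sqrt p := Real.sqrt_pos.mpr (by linarith)
  rw [le_div_iff₀ hs0]
  nlinarith [sq_nonneg (Real.sqrt p - 3)]

private lemma g37 {p : ℕ} (hp : 37 ≤ p) : (29/5 : ℝ) ≤ ((p : ℝ) - 1) / Real.sqrt p := by
  have hpR : (37 : ℝ) ≤ (p : ℝ) := by exact_mod_cast hp
  have hs := Real.sq_sqrt (by positivity : (0:ℝ) ≤ (p:ℝ))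
  have hs0 : 0 < Real.sqrt p := Real.sqrt_pos.mpr (by linarith)
  rw [le_div_iff₀ hs0]
  nlinarith [sq_nonneg (Real.sqrt p - 29/5)]


private lemma tier_numeric (a b c : ℕ) (ha : a ≤ 2) (hb : b ≤ 7) (habc : 12 ≤ a + b + c) :
    (150 : ℝ) * 2 ^ (a + b + c) ≤ (17/10) ^ a * 3 ^ b * (29/5) ^ c := by
  have h1 : ((17:ℝ)/10) ^ a = 2 ^ a * (17/20) ^ a := by
    rw [← mul_pow]; norm_num
  have h2 : ((3:ℝ)) ^ b = 2 ^ b * (3/2) ^ b := by rw [← mul_pow]; norm_num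
  have h3 : ((29:ℝ)/5) ^ c = 2 ^ c * (29/10) ^ c := by rw [← mul_pow]; norm_num
  rw [h1, h2, h3, pow_add, pow_add]
  have e1 : ((17:ℝ)/20) ^ 2 ≤ (17/20) ^ a :=
    pow_le_pow_of_le_one (by norm_num) (by norm_num) ha
  have hc3 : 3 ≤ c := by omega
  have hbc : 10 ≤ b + c := by omega
  have e2 : ((3:ℝ)/2) ^ b * (29/10) ^ c = (3/2) ^ (b + c) * (29/15) ^ c := by
    rw [show (29:ℝ)/10 = (3/2) * (29/15) by norm_num, mul_pow, pow_add]
    ring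
  have e3 : ((3:ℝ)/2) ^ 10 ≤ (3/2) ^ (b + c) := pow_le_pow_right₀ (by norm_num) hbc
  have e4 : ((29:ℝ)/15) ^ 3 ≤ (29/15) ^ c := pow_le_pow_right₀ (by norm_num) hc3
  have k1 : ((3:ℝ)/2) ^ 10 * (29/15) ^ 3 ≤ (3/2) ^ b * (29/10) ^ c := by
    rw [e2]
    exact mul_le_mul e3 e4 (by positivity) (by positivity)
  have key : (150 : ℝ) ≤ (17/20) ^ a * ((3/2) ^ b * (29/10) ^ c) := by
    calc (150 : ℝ) ≤ (17/20) ^ 2 * ((3/2) ^ 10 * (29/15) ^ 3) := by norm_num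
      _ ≤ (17/20) ^ a * ((3/2) ^ b * (29/10) ^ c) :=
          mul_le_mul e1 k1 (by positivity) (by positivity)
  have hpos : (0:ℝ) ≤ 2 ^ a * 2 ^ b * 2 ^ c := by positivity
  calc (150:ℝ) * (2 ^ a * 2 ^ b * 2 ^ c)
      ≤ ((17/20) ^ a * ((3/2) ^ b * (29/10) ^ c)) * (2 ^ a * 2 ^ b * 2 ^ c) :=
        mul_le_mul_of_nonneg_right key hpos
    _ = 2 ^ a * (17/20) ^ a * (2 ^ b * (3/2) ^ b) * (2 ^ c * (29/10) ^ c) := by ring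

private lemma XQ_bound (t : ℕ) (ht : Squarefree t) (h6 : Nat.Coprime t 6)
    (hm : 12 ≤ t.primeFactors.card) :
    (150:ℝ) * 2 ^ t.primeFactors.card
      ≤ Real.sqrt t * ∏ p ∈ t.primeFactors, (1 - 1/(p:ℝ)) := by
  rw [prod_g t ht]
  set S := t.primeFactors with hS
  set f : ℕ → ℝ := fun p => ((p:ℝ) - 1) / Real.sqrt p with hf
  have hp5 : ∀ p ∈ S, 5 ≤ p := by
    intro p hp
    have hprime : p.Prime := Nat.prime_of_mem_primeFactors hp
    have hdvd : p ∣ t := Nat.dvd_of_mem_primeFactors hp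
    have h2 : p ≠ 2 := by
      rintro rfl
      have : (2:ℕ) ∣ 6 := by norm_num
      have := Nat.eq_one_of_dvd_coprimes h6 hdvd this
      norm_num at this
    have h3 : p ≠ 3 := by
      rintro rfl
      have : (3:ℕ) ∣ 6 := by norm_num
      have := Nat.eq_one_of_dvd_coprimes h6 hdvd this
      norm_num at this
    have h4 : p ≠ 4 := by rintro rfl; norm_num at hprime
    have := hprime.two_le
    omega
  have hf0 : ∀ p ∈ S, 0 ≤ f p := by
    intro p hp
    have h5 := hp5 p hp
    have : (1:ℝ) ≤ (p:ℝ) := by exact_mod_cast by omega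
    exact div_nonneg (by linarith) (Real.sqrt_nonneg _)
  -- partition
  set S1 := S.filter (fun p => p < 11) with hS1
  set S' := S.filter (fun p => ¬ p < 11) with hS'
  set S2 := S'.filter (fun p => p < 37) with hS2
  set S3 := S'.filter (fun p => ¬ p < 37) with hS3
  have hsplit1 : (∏ p ∈ S1, f p) * ∏ p ∈ S', f p = ∏ p ∈ S, f p :=
    Finset.prod_filter_mul_prod_filter_not S _ f
  have hsplit2 : (∏ p ∈ S2, f p) * ∏ p ∈ S3, f p = ∏ p ∈ S', f p :=
    Finset.prod_filter_mul_prod_filter_not S' _ f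
  have hcard1 : S1.card + S'.card = S.card :=
    Finset.card_filter_add_card_filter_not _
  have hcard2 : S2.card + S3.card = S'.card :=
    Finset.card_filter_add_card_filter_not _
  have ha : S1.card ≤ 2 := by
    have : S1 ⊆ ({5, 7} : Finset ℕ) := by
      intro p hp
      have hmem := Finset.mem_filter.mp hp
      have hprime : p.Prime := Nat.prime_of_mem_primeFactors (hS ▸ hmem.1)
      have h5 := hp5 p hmem.1
      have h11 := hmem.2
      interval_cases p <;> revert hprime <;> decide
    calc S1.card ≤ ({5,7} : Finset ℕ).card := Finset.card_le_card this
      _ = 2 := by decide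
  have hb : S2.card ≤ 7 := by
    have : S2 ⊆ ({11, 13, 17, 19, 23, 29, 31} : Finset ℕ) := by
      intro p hp
      have hmem := Finset.mem_filter.mp hp
      have hmem' := Finset.mem_filter.mp hmem.1
      have hprime : p.Prime := Nat.prime_of_mem_primeFactors hmem'.1
      have h11 : 11 ≤ p := by omega
      have h37 := hmem.2
      interval_cases p <;> revert hprime <;> decide
    calc S2.card ≤ ({11, 13, 17, 19, 23, 29, 31} : Finset ℕ).card := Finset.card_le_card this
      _ = 7 := by decide
  have hb1 : ((17:ℝ)/10) ^ S1.card ≤ ∏ p ∈ S1, f p := by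
    rw [← Finset.prod_const]
    exact Finset.prod_le_prod (fun _ _ => by norm_num)
      (fun p hp => g5 (hp5 p (Finset.mem_filter.mp hp).1))
  have hb2 : ((3:ℝ)) ^ S2.card ≤ ∏ p ∈ S2, f p := by
    rw [← Finset.prod_const]
    refine Finset.prod_le_prod (fun _ _ => by norm_num) (fun p hp => ?_)
    have hmem := Finset.mem_filter.mp hp
    have hmem' := Finset.mem_filter.mp hmem.1
    exact g11 (by omega)
  have hb3 : ((29:ℝ)/5) ^ S3.card ≤ ∏ p ∈ S3, f p := by
    rw [← Finset.prod_const]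
    refine Finset.prod_le_prod (fun _ _ => by norm_num) (fun p hp => ?_)
    have hmem := Finset.mem_filter.mp hp
    exact g37 (by omega)
  have hnum := tier_numeric S1.card S2.card S3.card ha hb (by omega)
  have nn1 : (0:ℝ) ≤ ∏ p ∈ S1, f p :=
    Finset.prod_nonneg fun p hp => hf0 p (Finset.mem_filter.mp hp).1
  have nn2 : (0:ℝ) ≤ ∏ p ∈ S2, f p :=
    Finset.prod_nonneg fun p hp => hf0 p (Finset.mem_filter.mp (Finset.mem_filter.mp hp).1).1
  have nn3 : (0:ℝ) ≤ ∏ p ∈ S3, f p :=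
    Finset.prod_nonneg fun p hp => hf0 p (Finset.mem_filter.mp (Finset.mem_filter.mp hp).1).1
  have m23 : (3:ℝ) ^ S2.card * (29/5) ^ S3.card ≤ (∏ p ∈ S2, f p) * ∏ p ∈ S3, f p :=
    mul_le_mul hb2 hb3 (by positivity) nn2
  have mall : ((17:ℝ)/10) ^ S1.card * ((3:ℝ) ^ S2.card * (29/5) ^ S3.card)
      ≤ (∏ p ∈ S1, f p) * ((∏ p ∈ S2, f p) * ∏ p ∈ S3, f p) :=
    mul_le_mul hb1 m23 (by positivity) nn1
  calc (150:ℝ) * 2 ^ S.card = 150 * 2 ^ (S1.card + S2.card + S3.card) := by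
        congr 2
        omega
    _ ≤ (17/10) ^ S1.card * 3 ^ S2.card * (29/5) ^ S3.card := hnum
    _ = (17/10) ^ S1.card * ((3:ℝ) ^ S2.card * (29/5) ^ S3.card) := by ring
    _ ≤ (∏ p ∈ S1, f p) * ((∏ p ∈ S2, f p) * ∏ p ∈ S3, f p) := mall
    _ = ∏ p ∈ S, f p := by rw [hsplit2, hsplit1]

private lemma exists_u (t : ℕ) (ht : Squarefree t) (h6 : Nat.Coprime t 6)
    (hm : 12 ≤ t.primeFactors.card) :
    ∃ u : ℕ, Nat.Coprime u (6 * t) ∧ 23 * t < u ^ 2 ∧ u ^ 2 < 24 * t := by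
  have ht0 : 0 < t := Nat.pos_of_ne_zero ht.ne_zero
  set A := Nat.sqrt (23 * t) with hA
  set B := Nat.sqrt (24 * t - 1) with hB
  have hAB : A ≤ B := Nat.sqrt_le_sqrt (by omega)
  have h6t : Squarefree (6 * t) := by
    rw [Nat.squarefree_mul h6.symm]
    refine ⟨?_, ht⟩
    rw [show (6:ℕ) = 2 * 3 from rfl, Nat.squarefree_mul (by norm_num)]
    exact ⟨Nat.prime_two.squarefree, Nat.prime_three.squarefree⟩
  have hpf6 : (6:ℕ).primeFactors = {2, 3} := by
    have : (6:ℕ) = 2 * 3 := by norm_num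
    rw [this, Nat.primeFactors_mul (by norm_num) (by norm_num),
      Nat.Prime.primeFactors (by norm_num), Nat.Prime.primeFactors (by norm_num)]
    rfl
  have hpf : (6 * t).primeFactors = {2, 3} ∪ t.primeFactors := by
    rw [Nat.primeFactors_mul (by norm_num) ht0.ne', hpf6]
  have hnot : ∀ p ∈ t.primeFactors, p ≠ 2 ∧ p ≠ 3 := by
    intro p hp
    have hdvd := Nat.dvd_of_mem_primeFactors hp
    have hprime := Nat.prime_of_mem_primeFactors hp
    constructor <;> rintro rfl
    · have := Nat.eq_one_of_dvd_coprimes h6 hdvd (by norm_num)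
      norm_num at this
    · have := Nat.eq_one_of_dvd_coprimes h6 hdvd (by norm_num)
      norm_num at this
  have hdisj : Disjoint ({2,3} : Finset ℕ) t.primeFactors := by
    rw [Finset.disjoint_left]
    intro p hp hpt
    have := hnot p hpt
    simp at hp
    omega
  have hcard6 : (6 * t).primeFactors.card = t.primeFactors.card + 2 := by
    rw [hpf, Finset.card_union_of_disjoint hdisj]
    simp [add_comm]
  have hprod6 : ∏ p ∈ (6 * t).primeFactors, (1 - 1/(p:ℝ))
      = (1/3) * ∏ p ∈ t.primeFactors, (1 - 1/(p:ℝ)) := by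
    rw [hpf, Finset.prod_union hdisj]
    norm_num
  set Q := ∏ p ∈ t.primeFactors, (1 - 1/(p:ℝ)) with hQdef
  have hQ0 : 0 ≤ Q := by
    apply Finset.prod_nonneg
    intro p hp
    have h2 := (Nat.prime_of_mem_primeFactors hp).two_le
    have : (1:ℝ) ≤ (p:ℝ) := by exact_mod_cast by omega
    have hppos : (0:ℝ) < (p:ℝ) := by linarith
    have : 1/(p:ℝ) ≤ 1 := by
      rw [div_le_one hppos]; exact this
    linarith
  have hQ1 : Q ≤ 1 := by
    apply Finset.prod_le_one
    · intro p hp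
      have h2 := (Nat.prime_of_mem_primeFactors hp).two_le
      have hppos : (0:ℝ) < (p:ℝ) := by exact_mod_cast by omega
      have : 1/(p:ℝ) ≤ 1 := by
        rw [div_le_one hppos]; exact_mod_cast by omega
      linarith
    · intro p hp
      have hppos : (0:ℝ) < (p:ℝ) := by
        exact_mod_cast (Nat.prime_of_mem_primeFactors hp).pos
      have : 0 < 1/(p:ℝ) := by positivity
      linarith
  -- real sqrt bounds
  set X := Real.sqrt t with hX
  have hX0 : 0 ≤ X := Real.sqrt_nonneg _
  have hAle : (A : ℝ) ≤ Real.sqrt 23 * X := by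
    have h1 : (A:ℝ)^2 ≤ ((23 * t : ℕ) : ℝ) := by exact_mod_cast Nat.sqrt_le' (23 * t)
    have h2 : (A:ℝ) ≤ Real.sqrt ((23 * t : ℕ) : ℝ) :=
      (Real.le_sqrt (by positivity) (by positivity)).mpr h1
    have h3 : Real.sqrt ((23 * t : ℕ) : ℝ) = Real.sqrt 23 * X := by
      push_cast
      rw [Real.sqrt_mul (by norm_num)]
    linarith [h2, h3.le]
  have hBge : Real.sqrt 24 * X - 1 ≤ (B : ℝ) := by
    have h1 : (24 * t : ℕ) ≤ (B + 1) ^ 2 := by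
      have h0 : 24 * t - 1 < (B + 1) ^ 2 := by
        simpa [Nat.succ_eq_add_one] using Nat.lt_succ_sqrt' (24 * t - 1)
      omega
    have h1R : ((24 * t : ℕ) : ℝ) ≤ ((B:ℝ) + 1) ^ 2 := by exact_mod_cast h1
    have h2 : Real.sqrt ((24 * t : ℕ) : ℝ) ≤ (B:ℝ) + 1 := by
      calc Real.sqrt ((24 * t : ℕ) : ℝ) ≤ Real.sqrt (((B:ℝ) + 1) ^ 2) := Real.sqrt_le_sqrt h1R
        _ = (B:ℝ) + 1 := Real.sqrt_sq (by positivity)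
    have h3 : Real.sqrt ((24 * t : ℕ) : ℝ) = Real.sqrt 24 * X := by
      push_cast
      rw [Real.sqrt_mul (by norm_num)]
    linarith [h2, h3.ge]
  have hsq : Real.sqrt 24 * X - Real.sqrt 23 * X ≥ X / 10 := by
    have h23 : Real.sqrt 23 ^ 2 = 23 := Real.sq_sqrt (by norm_num)
    have h24 : Real.sqrt 24 ^ 2 = 24 := Real.sq_sqrt (by norm_num)
    have n23 : 0 ≤ Real.sqrt 23 := Real.sqrt_nonneg _
    have n24 : 0 ≤ Real.sqrt 24 := Real.sqrt_nonneg _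
    have ha : Real.sqrt 23 ≤ 48/10 := by nlinarith [sq_nonneg (Real.sqrt 23 - 48/10)]
    have hbb : Real.sqrt 24 ≤ 49/10 := by nlinarith [sq_nonneg (Real.sqrt 24 - 49/10)]
    have hdiff : (Real.sqrt 24 - Real.sqrt 23) * (Real.sqrt 24 + Real.sqrt 23) = 1 := by
      linear_combination h24 - h23
    have hpos : 0 < Real.sqrt 24 + Real.sqrt 23 := by
      have : 0 < Real.sqrt 24 := Real.sqrt_pos.mpr (by norm_num)
      linarith
    have key : Real.sqrt 24 - Real.sqrt 23 ≥ 1/10 := by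
      by_contra hcon
      push_neg at hcon
      have h1 : (Real.sqrt 24 - Real.sqrt 23) * (Real.sqrt 24 + Real.sqrt 23)
          < (1/10) * (Real.sqrt 24 + Real.sqrt 23) :=
        mul_lt_mul_of_pos_right hcon hpos
      rw [hdiff] at h1
      nlinarith [ha, hbb]
    have h1 := mul_le_mul_of_nonneg_right key hX0
    nlinarith [h1]
  -- main count bound
  have hcount := count_lower (6 * t) A B h6t hAB
  have hXQ := XQ_bound t ht h6 hm
  set n := t.primeFactors.card with hn
  have h2n : (1:ℝ) ≤ 2 ^ n := one_le_pow₀ (by norm_num)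
  have hlow : ((B:ℝ) - A) * ∏ p ∈ (6 * t).primeFactors, (1 - 1/(p:ℝ))
      - 2 ^ (6 * t).primeFactors.card > 0 := by
    rw [hprod6, hcard6]
    have hBA : ((B:ℝ) - A) ≥ X / 10 - 1 := by linarith
    have hstep : ((B:ℝ) - A) * ((1/3) * Q) ≥ (X/10 - 1) * ((1/3) * Q) := by
      apply mul_le_mul_of_nonneg_right hBA
      positivity
    have hXQ' : X * Q ≥ 150 * 2 ^ n := hXQ
    have : (X/10 - 1) * ((1/3) * Q) = X * Q / 30 - Q / 3 := by ring
    have hpow : (2:ℝ) ^ (n + 2) = 4 * 2 ^ n := by rw [pow_add]; ring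
    rw [hpow]
    linarith [hstep, this, hXQ', hQ1, h2n]
  have hcardR : (0:ℝ) < (#((Ioc A B).filter (fun u => Nat.Coprime u (6 * t))) : ℝ) :=
    lt_of_lt_of_le hlow hcount
  have hpos : 0 < #((Ioc A B).filter (fun u => Nat.Coprime u (6 * t))) := by
    exact_mod_cast hcardR
  obtain ⟨u, hu⟩ := Finset.card_pos.mp hpos
  rw [Finset.mem_filter, Finset.mem_Ioc] at hu
  obtain ⟨⟨hAu, huB⟩, hcop⟩ := hu
  refine ⟨u, hcop, ?_, ?_⟩
  · have h1 : (A + 1) ^ 2 ≤ u ^ 2 := Nat.pow_le_pow_left (by omega) 2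
    have h2 : 23 * t < (A + 1) ^ 2 := by
      simpa [Nat.succ_eq_add_one] using Nat.lt_succ_sqrt' (23 * t)
    omega
  · have h1 : u ^ 2 ≤ B ^ 2 := Nat.pow_le_pow_left huB 2
    have h2 : B ^ 2 ≤ 24 * t - 1 := Nat.sqrt_le' (24 * t - 1)
    omega

private lemma jacobi_part {t u p : ℕ} (hp : p.Prime) (hpt : p ∣ t)
    (h2u : ¬ 2 ∣ u) (h3u : ¬ 3 ∣ u) (hpu : ¬ p ∣ u)
    (h23 : 23 * t < u ^ 2) (h24 : u ^ 2 < 24 * t)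
    (hp2 : p ≠ 2) (hp3 : p ≠ 3) :
    jacobiSym (-(p : ℤ)) (24 * t - u ^ 2) = -1 := by
  set s : ℕ := 24 * t - u ^ 2 with hs
  have hu24 : u ^ 2 % 24 = 1 := sq_mod24 h2u h3u
  have hs23 : s % 24 = 23 := by omega
  have hsodd : Odd s := by
    refine Nat.odd_iff.mpr ?_
    omega
  have hs4 : s % 4 = 3 := by omega
  have hpodd : p % 2 = 1 := Nat.odd_iff.mp (hp.odd_of_ne_two hp2)
  have hp4 : p % 4 = 1 ∨ p % 4 = 3 := by omega
  have hsub : (s:ℤ) = 24 * (t:ℤ) - (u:ℤ)^2 := by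
    rw [hs]
    push_cast [h24.le]
    ring
  obtain ⟨k, hk⟩ := hpt
  have hkZ : (t:ℤ) = (p:ℤ) * (k:ℤ) := by exact_mod_cast hk
  have hdvd : (p:ℤ) ∣ (-(u:ℤ)^2) - (s:ℤ) := ⟨-24 * k, by rw [hsub, hkZ]; ring⟩
  have hcong : (s:ℤ) ≡ -(u:ℤ)^2 [ZMOD (p:ℤ)] := (Int.modEq_iff_dvd.mpr hdvd)
  have hmod : jacobiSym (s:ℤ) p = jacobiSym (-(u:ℤ)^2) p := jacobiSym.mod_left' hcong
  have hcopu : Int.gcd ((u:ℤ)) ((p:ℕ):ℤ) = 1 := by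
    have h := (Nat.Prime.coprime_iff_not_dvd hp).mpr hpu
    simpa [Int.gcd_natCast_natCast] using h.symm
  have hsq : jacobiSym ((u:ℤ)^2) p = 1 := jacobiSym.sq_one' hcopu
  have hchi_p : jacobiSym (-((u:ℤ)^2)) p = (ZMod.χ₄ p : ℤ) := by
    rw [jacobiSym.neg _ (Nat.odd_iff.mpr hpodd), hsq, mul_one]
  have hchi_s : (ZMod.χ₄ s : ℤ) = -1 := by
    rw [ZMod.χ₄_nat_eq_if_mod_four]
    have h1 : s % 2 = 1 := by omega
    rw [if_neg (by omega), if_neg (by omega)]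
  have hneg : jacobiSym (-(p : ℤ)) s = (ZMod.χ₄ s : ℤ) * jacobiSym ((p:ℤ)) s :=
    jacobiSym.neg _ hsodd
  rcases hp4 with h1 | h3
  · have hrec : jacobiSym ((p:ℤ)) s = jacobiSym ((s:ℤ)) p :=
      jacobiSym.quadratic_reciprocity_one_mod_four h1 hsodd
    have hchi_p1 : (ZMod.χ₄ p : ℤ) = 1 := by
      rw [ZMod.χ₄_nat_eq_if_mod_four, if_neg (by omega), if_pos h1]
    rw [hneg, hrec, hmod, hchi_p, hchi_s, hchi_p1]
    norm_num
  · have hrec : jacobiSym ((p:ℤ)) s = -jacobiSym ((s:ℤ)) p :=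
      jacobiSym.quadratic_reciprocity_three_mod_four h3 hs4
    have hchi_p3 : (ZMod.χ₄ p : ℤ) = -1 := by
      rw [ZMod.χ₄_nat_eq_if_mod_four, if_neg (by omega), if_neg (by omega)]
    rw [hneg, hrec, hmod, hchi_p, hchi_s, hchi_p3]
    norm_num


/-- If `t` is squarefree, coprime to `6`, and has at least `12` distinct prime factors, then
there is a positive `s < t` with `s ≡ 23 (mod 24)` such that the Jacobi symbol `(-p | s)`
equals `-1` for every prime `p` dividing `t`. -/
theorem exists_inert_s (t : ℕ) (ht : Squarefree t) (h6 : Nat.Coprime t 6)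
    (hm : 12 ≤ t.primeFactors.card) :
    ∃ s : ℕ, 0 < s ∧ s < t ∧ s % 24 = 23 ∧
      ∀ p : ℕ, p.Prime → p ∣ t → jacobiSym (-(p : ℤ)) s = -1 := by
  obtain ⟨u, hcop, h23, h24⟩ := exists_u t ht h6 hm
  have h2u : ¬ 2 ∣ u := by
    intro h
    have h2 : (2:ℕ) ∣ Nat.gcd u (6 * t) := Nat.dvd_gcd h ⟨3 * t, by ring⟩
    rw [hcop] at h2
    omega
  have h3u : ¬ 3 ∣ u := by
    intro h
    have h2 : (3:ℕ) ∣ Nat.gcd u (6 * t) := Nat.dvd_gcd h ⟨2 * t, by ring⟩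
    rw [hcop] at h2
    omega
  have hu24 : u ^ 2 % 24 = 1 := sq_mod24 h2u h3u
  refine ⟨24 * t - u ^ 2, by omega, by omega, by omega, ?_⟩
  intro p hp hpt
  have hp2 : p ≠ 2 := by
    rintro rfl
    have := Nat.eq_one_of_dvd_coprimes h6 hpt (by norm_num)
    norm_num at this
  have hp3 : p ≠ 3 := by
    rintro rfl
    have := Nat.eq_one_of_dvd_coprimes h6 hpt (by norm_num)
    norm_num at this
  have hpu : ¬ p ∣ u := by
    intro h
    have hp6t : p ∣ 6 * t := Dvd.dvd.mul_left hpt 6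
    have h2 : p ∣ Nat.gcd u (6 * t) := Nat.dvd_gcd h hp6t
    rw [hcop] at h2
    have := hp.one_lt
    have := Nat.le_of_dvd (by norm_num) h2
    omega
  exact jacobi_part hp hpt h2u h3u hpu h23 h24 hp2 hp3
end
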